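/- Let n ≥ 1, κ ∈ ℂ∖{0}, and let (a,b) ∈ ℂⁿ × ℂⁿ be a point with G_i := 1 + Σ_{r=i}^n a_r b_r ≠ 0 for all 1 ≤ i ≤ n (set G_{n+1} := 1). Define the antisymmetric bilinear form ω on ℂⁿ × ℂⁿ by ω((u^a,u^b),(v^a,v^b)) := −(1/κ) Σ_{i=1}^n (u^a_i v^b_i − v^a_i u^b_i)/G_i + (1/(2κ)) Σ_{1≤i<s≤n} [(b_i u^a_i − a_i u^b_i)(b_s v^a_s + a_s v^b_s) − (b_i v^a_i − a_i v^b_i)(b_s u^a_s + a_s u^b_s)]/(G_i G_{i+1}), and the vectors X_{a_j}, X_{b_j} ∈ ℂⁿ × ℂⁿ by: (X_{a_j})^a_l = (κ/2) sgn(l−j) a_l a_j, (X_{a_j})^b_l = −(κ/2) a_j b_l for l ≠ j, (X_{a_j})^b_j = −κ G_j; (X_{b_j})^a_l = (κ/2) a_l b_j for l ≠ j, (X_{b_j})^a_j = κ G_j, (X_{b_j})^b_l = −(κ/2) sgn(l−j) b_l b_j. Then for every j ∈ {1,…,n} and every v = (v^a,v^b) ∈ ℂⁿ × ℂⁿ: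 ω(X_{a_j}, v) = −v^a_j and ω(X_{b_j}, v) = −v^b_j. Consequently, ω is nondegenerate at every such point. -/

import Mathlib

open Matrix BigOperators

noncomputable section

attribute [local instance] Matrix.normedAddCommGroup Matrix.normedSpace

/-- complex-valued sign of an integer, with `csgn 0 = 0`. -/
def csgn (m : ℤ) : ℂ := (m.sign : ℂ)

/-- Kronecker delta with values in `ℂ`. -/
def cdelta {K : Type*} [DecidableEq K] (i j : K) : ℂ := if i = j then 1 else 0

lemma csgn_pos {m : ℤ} (h : 0 < m) : csgn m = 1 := by simp [csgn, Int.sign_eq_one_of_pos h]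
lemma csgn_neg {m : ℤ} (h : m < 0) : csgn m = -1 := by simp [csgn, Int.sign_eq_neg_one_of_neg h]

lemma tele_nat (f : ℕ → ℂ) (m k : ℕ) (h : m ≤ k) :
    ∑ i ∈ Finset.Ico m k, (f (i+1) - f i) = f k - f m := by
  induction k, h using Nat.le_induction with
  | base => simp
  | succ k hk ih => rw [Finset.sum_Ico_succ_top hk, ih]; ring

lemma tele_fin {n : ℕ} (F : Fin (n+1) → ℂ) (p q : Fin n) (hpq : p < q) :
    ∑ i : Fin n, (if p < i ∧ i < q then F i.succ - F i.castSucc else 0)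
      = F q.castSucc - F p.succ := by
  set f : ℕ → ℂ := fun k => if h : k < n + 1 then F ⟨k, h⟩ else 0 with hf
  have hfc : ∀ i : Fin n, f (i : ℕ) = F i.castSucc := by
    intro i; simp only [hf]; rw [dif_pos (by omega)]; rfl
  have hfs : ∀ i : Fin n, f ((i : ℕ) + 1) = F i.succ := by
    intro i; simp only [hf]; rw [dif_pos (by omega)]; rfl
  calc ∑ i : Fin n, (if p < i ∧ i < q then F i.succ - F i.castSucc else 0)
      = ∑ i : Fin n, (fun k : ℕ => if (p : ℕ) < k ∧ k < (q : ℕ) then f (k+1) - f k else 0) (i : ℕ) :=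
        Finset.sum_congr rfl (fun i _ => by simp only [Fin.lt_def, hfc, hfs])
    _ = ∑ k ∈ Finset.range n, (if (p : ℕ) < k ∧ k < (q : ℕ) then f (k+1) - f k else 0) := by
        exact Fin.sum_univ_eq_sum_range (fun k => if (p : ℕ) < k ∧ k < (q : ℕ) then f (k+1) - f k else 0) n
    _ = ∑ k ∈ (Finset.range n).filter (fun k => (p : ℕ) < k ∧ k < (q : ℕ)), (f (k+1) - f k) :=
        (Finset.sum_filter _ _).symm
    _ = ∑ k ∈ Finset.Ico ((p : ℕ)+1) (q : ℕ), (f (k+1) - f k) := by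
        apply Finset.sum_congr _ (fun _ _ => rfl)
        ext k
        simp only [Finset.mem_filter, Finset.mem_range, Finset.mem_Ico]
        have := q.isLt
        omega
    _ = f (q : ℕ) - f ((p : ℕ) + 1) := tele_nat f _ _ (by exact hpq)
    _ = F q.castSucc - F p.succ := by rw [hfc q, hfs p]

lemma key {n : ℕ} {κ : ℂ} (hκ : κ ≠ 0) (a b : Fin n → ℂ) (G : Fin (n+1) → ℂ)
    (hGne : ∀ i, G i ≠ 0)
    (hstep : ∀ i : Fin n, G i.castSucc = a i * b i + G i.succ)
    (j : Fin n) (c ε w : ℂ)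
    (u v : (Fin n → ℂ) × (Fin n → ℂ))
    (h1 : ∀ i : Fin n, (u.1 i * v.2 i - v.1 i * u.2 i) / G i.castSucc
        = (if i = j then κ * w else 0)
          + κ * c / 2 * (if j < i then (b i * v.1 i + a i * v.2 i) * (G i.castSucc)⁻¹
              else if i < j then -ε * ((b i * v.1 i - a i * v.2 i) * (G i.castSucc)⁻¹) else 0))
    (h2 : ∀ i : Fin n, b i * u.1 i - a i * u.2 i
        = if i = j then κ * c * G j.castSucc else if j < i then κ * c * (a i * b i) else 0)
    (h3 : ∀ s : Fin n, b s * u.1 s + a s * u.2 s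
        = ε * (κ * c) * (if s = j then G j.castSucc else if s < j then a s * b s else 0)) :
    -(1 / κ) * (∑ i : Fin n, (u.1 i * v.2 i - v.1 i * u.2 i) / G i.castSucc)
      + 1 / (2 * κ) * ∑ i : Fin n, ∑ s : Fin n,
          (if i < s then
            ((b i * u.1 i - a i * u.2 i) * (b s * v.1 s + a s * v.2 s)
              - (b i * v.1 i - a i * v.2 i) * (b s * u.1 s + a s * u.2 s))
              / (G i.castSucc * G i.succ)
            else 0) = -w := by
  -- abbreviation for the common sum
  have sum1 : ∑ i : Fin n, (u.1 i * v.2 i - v.1 i * u.2 i) / G i.castSucc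
      = κ * w + κ * c / 2 * ∑ i : Fin n,
          (if j < i then (b i * v.1 i + a i * v.2 i) * (G i.castSucc)⁻¹
            else if i < j then -ε * ((b i * v.1 i - a i * v.2 i) * (G i.castSucc)⁻¹) else 0) := by
    rw [Finset.sum_congr rfl (fun i _ => h1 i), Finset.sum_add_distrib,
      Finset.sum_ite_eq' Finset.univ j (fun _ => κ * w), ← Finset.mul_sum]
    simp
  -- inner sum over i (telescoping)
  have hA : ∀ s : Fin n, (∑ i : Fin n,
        (if i < s then (if i = j then κ * c * G j.castSucc else if j < i then κ * c * (a i * b i) else 0)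
          / (G i.castSucc * G i.succ) else 0))
      = if j < s then κ * c * (G s.castSucc)⁻¹ else 0 := by
    intro s
    by_cases hjs : j < s
    · rw [if_pos hjs]
      have step : ∀ i : Fin n,
          (if i < s then (if i = j then κ * c * G j.castSucc else if j < i then κ * c * (a i * b i) else 0)
            / (G i.castSucc * G i.succ) else 0)
          = (if i = j then κ * c * G j.castSucc / (G j.castSucc * G j.succ) else 0)
            + (if j < i ∧ i < s then (fun t => (G t)⁻¹) i.succ - (fun t => (G t)⁻¹) i.castSucc else 0) * (κ * c) := by
        intro i
        rcases lt_trichotomy i j with h | h | h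
        · have e1 : ¬ (j < i ∧ i < s) := fun hc => (not_lt.mpr h.le) hc.1
          by_cases his : i < s
          · simp only [if_pos his, if_neg (ne_of_lt h), if_neg (not_lt.mpr h.le), if_neg e1]
            ring
          · simp only [if_neg his, if_neg (ne_of_lt h), if_neg e1]
            ring
        · subst h
          have e1 : ¬ (i < i ∧ i < s) := fun hc => lt_irrefl i hc.1
          simp only [if_pos (show i < s from hjs), if_pos (show i = i from rfl), if_neg e1]
          simp only [if_true]
          ring
        · have hne : i ≠ j := ne_of_gt h
          by_cases his : i < s
          · simp only [if_pos his, if_neg hne, if_pos h,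
              if_pos (show j < i ∧ i < s from ⟨h, his⟩)]
            have e := hstep i
            have n1 := hGne i.castSucc
            have n2 := hGne i.succ
            rw [show a i * b i = G i.castSucc - G i.succ from by linear_combination -e]
            field_simp
            ring
          · simp only [if_neg his, if_neg hne, if_neg (show ¬ (j < i ∧ i < s) from fun hc => his hc.2)]
            ring
      rw [Finset.sum_congr rfl (fun i _ => step i), Finset.sum_add_distrib,
        Finset.sum_ite_eq' Finset.univ j (fun _ => κ * c * G j.castSucc / (G j.castSucc * G j.succ)),
        ← Finset.sum_mul, tele_fin (fun t => (G t)⁻¹) j s hjs]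
      have n1 := hGne j.castSucc
      have n2 := hGne j.succ
      have n3 := hGne s.castSucc
      simp only [Finset.mem_univ, if_pos]
      field_simp
      ring
    · rw [if_neg hjs]
      apply Finset.sum_eq_zero
      intro i _
      by_cases his : i < s
      · have hij : i < j := lt_of_lt_of_le his (not_lt.mp hjs)
        rw [if_pos his, if_neg (ne_of_lt hij), if_neg (not_lt.mpr hij.le), zero_div]
      · rw [if_neg his]
  -- inner sum over s (telescoping)
  have hB : ∀ i : Fin n, (∑ s : Fin n,
        (if i < s then (if s = j then G j.castSucc else if s < j then a s * b s else 0) else 0))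
      = if i < j then G i.succ else 0 := by
    intro i
    by_cases hij : i < j
    · rw [if_pos hij]
      have step : ∀ s : Fin n,
          (if i < s then (if s = j then G j.castSucc else if s < j then a s * b s else 0) else 0)
          = (if s = j then G j.castSucc else 0)
            - (if i < s ∧ s < j then (G : Fin (n+1) → ℂ) s.succ - G s.castSucc else 0) := by
        intro s
        rcases lt_trichotomy s j with h | h | h
        · by_cases his : i < s
          · simp only [if_pos his, if_neg (ne_of_lt h), if_pos h,
              if_pos (show i < s ∧ s < j from ⟨his, h⟩)]
            rw [hstep s]; ring
          · simp only [if_neg his, if_neg (ne_of_lt h),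
              if_neg (show ¬ (i < s ∧ s < j) from fun hc => his hc.1)]
            ring
        · subst h
          have e1 : ¬ (i < s ∧ s < s) := fun hc => lt_irrefl s hc.2
          simp only [if_pos (show i < s from hij), if_pos (show s = s from rfl), if_neg e1]
          simp only [if_true]
          ring
        · have hne : s ≠ j := ne_of_gt h
          have e1 : ¬ (i < s ∧ s < j) := fun hc => (not_lt.mpr h.le) hc.2
          by_cases his : i < s
          · simp only [if_pos his, if_neg hne, if_neg (not_lt.mpr h.le), if_neg e1]
            ring
          · simp only [if_neg his, if_neg hne, if_neg e1]
            ring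
      rw [Finset.sum_congr rfl (fun s _ => step s), Finset.sum_sub_distrib,
        Finset.sum_ite_eq' Finset.univ j (fun _ => G j.castSucc),
        tele_fin G i j hij]
      simp only [Finset.mem_univ, if_pos]
      ring
    · rw [if_neg hij]
      apply Finset.sum_eq_zero
      intro s _
      by_cases his : i < s
      · have hjs : j < s := lt_of_le_of_lt (not_lt.mp hij) his
        rw [if_pos his, if_neg (ne_of_gt hjs), if_neg (not_lt.mpr hjs.le)]
      · rw [if_neg his]
  -- the double sum
  have sum2 : (∑ i : Fin n, ∑ s : Fin n,
        (if i < s then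
          ((b i * u.1 i - a i * u.2 i) * (b s * v.1 s + a s * v.2 s)
            - (b i * v.1 i - a i * v.2 i) * (b s * u.1 s + a s * u.2 s))
            / (G i.castSucc * G i.succ)
          else 0))
      = κ * c * ∑ i : Fin n,
          (if j < i then (b i * v.1 i + a i * v.2 i) * (G i.castSucc)⁻¹
            else if i < j then -ε * ((b i * v.1 i - a i * v.2 i) * (G i.castSucc)⁻¹) else 0) := by
    have hd : ∀ i s : Fin n, (if i < s then
          ((b i * u.1 i - a i * u.2 i) * (b s * v.1 s + a s * v.2 s)
            - (b i * v.1 i - a i * v.2 i) * (b s * u.1 s + a s * u.2 s))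
            / (G i.castSucc * G i.succ) else 0)
        = (if i < s then (if i = j then κ * c * G j.castSucc else if j < i then κ * c * (a i * b i) else 0)
              / (G i.castSucc * G i.succ) else 0) * (b s * v.1 s + a s * v.2 s)
          - ε * (κ * c) * ((b i * v.1 i - a i * v.2 i) / (G i.castSucc * G i.succ)
              * (if i < s then (if s = j then G j.castSucc else if s < j then a s * b s else 0) else 0)) := by
      intro i s
      by_cases h : i < s
      · rw [if_pos h, if_pos h, if_pos h, h2 i, h3 s]; ring
      · rw [if_neg h, if_neg h, if_neg h]; ring
    calc (∑ i : Fin n, ∑ s : Fin n, _)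
        = ∑ i : Fin n, ∑ s : Fin n,
            ((if i < s then (if i = j then κ * c * G j.castSucc else if j < i then κ * c * (a i * b i) else 0)
                / (G i.castSucc * G i.succ) else 0) * (b s * v.1 s + a s * v.2 s)
              - ε * (κ * c) * ((b i * v.1 i - a i * v.2 i) / (G i.castSucc * G i.succ)
                * (if i < s then (if s = j then G j.castSucc else if s < j then a s * b s else 0) else 0))) :=
          Finset.sum_congr rfl (fun i _ => Finset.sum_congr rfl (fun s _ => hd i s))
      _ = (∑ i : Fin n, ∑ s : Fin n,
            (if i < s then (if i = j then κ * c * G j.castSucc else if j < i then κ * c * (a i * b i) else 0)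
                / (G i.castSucc * G i.succ) else 0) * (b s * v.1 s + a s * v.2 s))
          - ∑ i : Fin n, ∑ s : Fin n,
            ε * (κ * c) * ((b i * v.1 i - a i * v.2 i) / (G i.castSucc * G i.succ)
              * (if i < s then (if s = j then G j.castSucc else if s < j then a s * b s else 0) else 0)) := by
          rw [← Finset.sum_sub_distrib]
          exact Finset.sum_congr rfl (fun i _ => Finset.sum_sub_distrib _ _)
      _ = (∑ s : Fin n, (if j < s then κ * c * (G s.castSucc)⁻¹ else 0) * (b s * v.1 s + a s * v.2 s))
          - ∑ i : Fin n, ε * (κ * c) * ((b i * v.1 i - a i * v.2 i) / (G i.castSucc * G i.succ)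
              * (if i < j then G i.succ else 0)) := by
          rw [Finset.sum_comm]
          congr 1
          · exact Finset.sum_congr rfl (fun s _ => by rw [← Finset.sum_mul, hA s])
          · exact Finset.sum_congr rfl (fun i _ => by rw [← Finset.mul_sum, ← Finset.mul_sum, hB i])
      _ = κ * c * ∑ i : Fin n,
            (if j < i then (b i * v.1 i + a i * v.2 i) * (G i.castSucc)⁻¹
              else if i < j then -ε * ((b i * v.1 i - a i * v.2 i) * (G i.castSucc)⁻¹) else 0) := by
          rw [Finset.mul_sum, ← Finset.sum_sub_distrib]
          apply Finset.sum_congr rfl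
          intro i _
          rcases lt_trichotomy i j with h | h | h
          · simp only [if_neg (not_lt.mpr h.le), if_pos h]
            have n1 := hGne i.castSucc
            have n2 := hGne i.succ
            field_simp
            ring
          · subst h
            simp only [if_neg (lt_irrefl i)]
            ring
          · simp only [if_pos h, if_neg (not_lt.mpr h.le)]
            ring
  rw [sum1, sum2]
  set X := ∑ i : Fin n,
      (if j < i then (b i * v.1 i + a i * v.2 i) * (G i.castSucc)⁻¹
        else if i < j then -ε * ((b i * v.1 i - a i * v.2 i) * (G i.castSucc)⁻¹) else 0) with hX
  field_simp
  ring


/-- the `2`-form `ω` pairs the Hamiltonian vector fields `X_{a_j}`, `X_{b_j}`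
with an arbitrary vector `v` to give `−v^a_j`, `−v^b_j`; consequently `ω` is nondegenerate. -/
theorem statement18 (n : ℕ) (hn : 1 ≤ n) (κ : ℂ) (hκ : κ ≠ 0)
    (a b : Fin n → ℂ) (G : Fin (n + 1) → ℂ)
    (hG : ∀ j, G j = 1 + ∑ r : Fin n, (if (j : ℕ) ≤ (r : ℕ) then a r * b r else 0))
    (hG0 : ∀ i : Fin n, G i.castSucc ≠ 0)
    (ω : ((Fin n → ℂ) × (Fin n → ℂ)) → ((Fin n → ℂ) × (Fin n → ℂ)) → ℂ)
    (hω : ∀ u v, ω u v =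
      -(1 / κ) * (∑ i : Fin n, (u.1 i * v.2 i - v.1 i * u.2 i) / G i.castSucc)
        + 1 / (2 * κ) * ∑ i : Fin n, ∑ s : Fin n,
            (if i < s then
              ((b i * u.1 i - a i * u.2 i) * (b s * v.1 s + a s * v.2 s)
                - (b i * v.1 i - a i * v.2 i) * (b s * u.1 s + a s * u.2 s))
                / (G i.castSucc * G i.succ)
              else 0))
    (Xa Xb : Fin n → (Fin n → ℂ) × (Fin n → ℂ))
    (hXa : ∀ j, Xa j =
      (fun l : Fin n => κ / 2 * csgn (((l : ℕ) : ℤ) - ((j : ℕ) : ℤ)) * a l * a j,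
       fun l : Fin n => if l = j then -κ * G j.castSucc else -(κ / 2) * a j * b l))
    (hXb : ∀ j, Xb j =
      (fun l : Fin n => if l = j then κ * G j.castSucc else κ / 2 * a l * b j,
       fun l : Fin n => -(κ / 2) * csgn (((l : ℕ) : ℤ) - ((j : ℕ) : ℤ)) * b l * b j)) :
    (∀ (j : Fin n) (v : (Fin n → ℂ) × (Fin n → ℂ)),
        ω (Xa j) v = -v.1 j ∧ ω (Xb j) v = -v.2 j) ∧
      (∀ v : (Fin n → ℂ) × (Fin n → ℂ), (∀ u, ω u v = 0) → v = 0) := by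
  -- G at the last index is 1
  have hGlast : G (Fin.last n) = 1 := by
    rw [hG]
    rw [Finset.sum_eq_zero (fun r _ => if_neg (by simpa using r.isLt.not_le))]
    ring
  have hGne : ∀ i : Fin (n + 1), G i ≠ 0 := by
    intro i
    rcases Fin.eq_castSucc_or_eq_last i with ⟨k, rfl⟩ | rfl
    · exact hG0 k
    · rw [hGlast]; exact one_ne_zero
  have hstep : ∀ i : Fin n, G i.castSucc = a i * b i + G i.succ := by
    intro i
    rw [hG i.castSucc, hG i.succ]
    have key : ∀ r : Fin n, (if ((i.castSucc : Fin (n+1)) : ℕ) ≤ (r : ℕ) then a r * b r else 0)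
        = (if r = i then a r * b r else 0)
          + (if ((i.succ : Fin (n+1)) : ℕ) ≤ (r : ℕ) then a r * b r else 0) := by
      intro r
      simp only [Fin.coe_castSucc, Fin.val_succ]
      by_cases hr : r = i
      · subst hr
        rw [if_pos (le_refl _), if_pos rfl, if_neg (by omega)]
        ring
      · have hne : (r : ℕ) ≠ (i : ℕ) := fun hc => hr (Fin.ext hc)
        rw [if_neg hr]
        by_cases hle : (i : ℕ) ≤ (r : ℕ)
        · rw [if_pos hle, if_pos (by omega)]; ring
        · rw [if_neg hle, if_neg (by omega)]; ring
    rw [Finset.sum_congr rfl (fun r _ => key r), Finset.sum_add_distrib,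
      Finset.sum_ite_eq' Finset.univ i (fun r => a r * b r)]
    simp only [Finset.mem_univ, if_pos]
    ring
  have csgn_eq_one : ∀ {p q : Fin n}, p < q → csgn (((q : ℕ) : ℤ) - ((p : ℕ) : ℤ)) = 1 := by
    intro p q h
    exact csgn_pos (sub_pos.mpr (by exact_mod_cast h))
  have csgn_eq_negone : ∀ {p q : Fin n}, q < p → csgn (((q : ℕ) : ℤ) - ((p : ℕ) : ℤ)) = -1 := by
    intro p q h
    exact csgn_neg (sub_neg.mpr (by exact_mod_cast h))
  have csgn_self : ∀ p : Fin n, csgn (((p : ℕ) : ℤ) - ((p : ℕ) : ℤ)) = 0 := by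
    intro p
    rw [sub_self]
    simp [csgn]
  have main : ∀ (j : Fin n) (v : (Fin n → ℂ) × (Fin n → ℂ)),
      ω (Xa j) v = -v.1 j ∧ ω (Xb j) v = -v.2 j := by
    intro j v
    constructor
    · rw [hω (Xa j) v]
      apply key hκ a b G hGne hstep j (a j) (-1) (v.1 j) (Xa j) v
      · -- h1
        intro i
        simp only [hXa j]
        rcases lt_trichotomy i j with h | h | h
        · rw [if_neg (ne_of_lt h), if_neg (not_lt.mpr h.le), if_pos h,
            csgn_eq_negone h, if_neg (ne_of_lt h)]
          ring
        · subst h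
          rw [if_pos rfl, if_pos rfl, csgn_self i, if_neg (lt_irrefl i)]
          have := hGne i.castSucc
          simp only [lt_self_iff_false, if_false]
          field_simp
          ring
        · rw [if_neg (ne_of_gt h), if_neg (ne_of_gt h), if_pos h, csgn_eq_one h]
          ring
      · -- h2
        intro i
        simp only [hXa j]
        rcases lt_trichotomy i j with h | h | h
        · rw [if_neg (ne_of_lt h), if_neg (ne_of_lt h), if_neg (not_lt.mpr h.le),
            csgn_eq_negone h]
          ring
        · subst h
          rw [if_pos rfl, if_pos rfl, csgn_self i]
          ring
        · rw [if_neg (ne_of_gt h), if_neg (ne_of_gt h), if_pos h, csgn_eq_one h]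
          ring
      · -- h3
        intro s
        simp only [hXa j]
        rcases lt_trichotomy s j with h | h | h
        · rw [if_neg (ne_of_lt h), if_neg (ne_of_lt h), if_pos h, csgn_eq_negone h]
          ring
        · subst h
          rw [if_pos rfl, if_pos rfl, csgn_self s]
          ring
        · rw [if_neg (ne_of_gt h), if_neg (ne_of_gt h), if_neg (not_lt.mpr h.le),
            csgn_eq_one h]
          ring
    · rw [hω (Xb j) v]
      apply key hκ a b G hGne hstep j (b j) 1 (v.2 j) (Xb j) v
      · -- h1
        intro i
        simp only [hXb j]
        rcases lt_trichotomy i j with h | h | h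
        · rw [if_neg (ne_of_lt h), if_neg (ne_of_lt h), if_neg (not_lt.mpr h.le), if_pos h,
            csgn_eq_negone h]
          ring
        · subst h
          rw [if_pos rfl, if_pos rfl, csgn_self i, if_neg (lt_irrefl i)]
          have := hGne i.castSucc
          simp only [lt_self_iff_false, if_false]
          field_simp
          ring
        · rw [if_neg (ne_of_gt h), if_neg (ne_of_gt h), if_pos h, csgn_eq_one h]
          ring
      · -- h2
        intro i
        simp only [hXb j]
        rcases lt_trichotomy i j with h | h | h
        · rw [if_neg (ne_of_lt h), if_neg (ne_of_lt h), if_neg (not_lt.mpr h.le),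
            csgn_eq_negone h]
          ring
        · subst h
          rw [if_pos rfl, if_pos rfl, csgn_self i]
          ring
        · rw [if_neg (ne_of_gt h), if_neg (ne_of_gt h), if_pos h, csgn_eq_one h]
          ring
      · -- h3
        intro s
        simp only [hXb j]
        rcases lt_trichotomy s j with h | h | h
        · rw [if_neg (ne_of_lt h), if_neg (ne_of_lt h), if_pos h, csgn_eq_negone h]
          ring
        · subst h
          rw [if_pos rfl, if_pos rfl, csgn_self s]
          ring
        · rw [if_neg (ne_of_gt h), if_neg (ne_of_gt h), if_neg (not_lt.mpr h.le),
            csgn_eq_one h]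
          ring
  refine ⟨main, ?_⟩
  intro v hv
  have h1 : v.1 = 0 := funext fun j => neg_eq_zero.mp ((main j v).1.symm.trans (hv (Xa j)))
  have h2 : v.2 = 0 := funext fun j => neg_eq_zero.mp ((main j v).2.symm.trans (hv (Xb j)))
  exact Prod.ext h1 h2
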